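/- For all positive integers a and n with n > ⌈log₂ a⌉ + 1, one has f(n,a) < f(n,a+1); that is, the function f is strictly increasing in a. -/

import Mathlib

/-- A family of sets is union-closed if it contains the union of any two of its sets. -/
def UnionClosed (F : Finset (Finset ℕ)) : Prop :=
  ∀ S ∈ F, ∀ T ∈ F, S ∪ T ∈ F

/-- `F` is a family of subsets of `[n] = {0, …, n-1}` (modeled as `Finset.range n`). -/
def FamilyOn (n : ℕ) (F : Finset (Finset ℕ)) : Prop :=
  ∀ S ∈ F, S ⊆ Finset.range n

/-- The degree of an element `e`: the number of sets of `F` containing `e`. -/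
def degOf (F : Finset (Finset ℕ)) (e : ℕ) : ℕ :=
  (F.filter (fun S => e ∈ S)).card

/-- `franklF n a` is the maximum cardinality of a nonempty union-closed family of subsets
of `[n]` in which every element of `[n]` belongs to at most `a` sets. -/
noncomputable def franklF (n a : ℕ) : ℕ :=
  sSup {m | ∃ F : Finset (Finset ℕ), UnionClosed F ∧ FamilyOn n F ∧ F.Nonempty ∧
    (∀ e ∈ Finset.range n, degOf F e ≤ a) ∧ F.card = m}

/-- `franklG n m` is the minimum, over union-closed families of subsets of `[n]` with
exactly `m` sets, of the maximum degree `max_{e ∈ [n]} |{S ∈ F : e ∈ S}|`. -/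
noncomputable def franklG (n m : ℕ) : ℕ :=
  sInf {a | ∃ F : Finset (Finset ℕ), UnionClosed F ∧ FamilyOn n F ∧ F.card = m ∧
    (Finset.range n).sup (degOf F) = a}

/-- The function `f` is strictly increasing in `a`: for all positive integers `a, n`
with `n > ⌈log₂ a⌉ + 1`, one has `f(n,a) < f(n,a+1)`. -/
theorem franklF_strictMono_a (a n : ℕ) (ha : 0 < a) (hn : 0 < n)
    (hlog : Nat.clog 2 a + 1 < n) :
    franklF n a < franklF n (a + 1) := by
  classical
  have hbdd : ∀ b : ℕ, BddAbove {m | ∃ F : Finset (Finset ℕ), UnionClosed F ∧ FamilyOn n F ∧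
      F.Nonempty ∧ (∀ e ∈ Finset.range n, degOf F e ≤ b) ∧ F.card = m} := by
    intro b
    refine ⟨2 ^ n, ?_⟩
    rintro m ⟨F, -, hFam, -, -, rfl⟩
    calc F.card ≤ (Finset.range n).powerset.card :=
          Finset.card_le_card (fun S hS => Finset.mem_powerset.mpr (hFam S hS))
      _ = 2 ^ n := by simp
  have hne : ({m | ∃ F : Finset (Finset ℕ), UnionClosed F ∧ FamilyOn n F ∧ F.Nonempty ∧
      (∀ e ∈ Finset.range n, degOf F e ≤ a) ∧ F.card = m} : Set ℕ).Nonempty := by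
    refine ⟨1, {∅}, ?_, ?_, ⟨∅, by simp⟩, ?_, by simp⟩
    · intro S hS T hT
      simp_all
    · intro S hS
      simp_all
    · intro e _
      simp [degOf, Finset.filter_singleton]
  have hmem := Nat.sSup_mem hne (hbdd a)
  obtain ⟨F, hUC, hFam, hFne, hdeg, hcard⟩ := hmem
  -- n ≥ 2
  have hn2 : 2 ≤ n := by omega
  -- a < 2 ^ (n - 1)
  have halt : a < 2 ^ (n - 1) := by
    have h1 : a ≤ 2 ^ Nat.clog 2 a := Nat.le_pow_clog one_lt_two a
    have h2 : 2 ^ Nat.clog 2 a < 2 ^ (n - 1) :=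
      Nat.pow_lt_pow_right one_lt_two (by omega)
    omega
  -- F is not all of the powerset: some subset of range n is missing
  have hmiss : ∃ S ∈ (Finset.range n).powerset, S ∉ F := by
    by_contra h
    push_neg at h
    -- then degOf F 0 ≥ 2^(n-1)
    have hinj : Set.InjOn (insert 0)
        ((((Finset.range n).erase 0).powerset : Finset (Finset ℕ)) : Set (Finset ℕ)) := by
      intro T hT U hU hTU
      simp only [Finset.coe_powerset, Set.mem_preimage, Set.mem_powerset_iff,
        Finset.coe_subset] at hT hU
      have h0T : 0 ∉ T := fun h0 => by
        have := hT h0; simp at this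
      have h0U : 0 ∉ U := fun h0 => by
        have := hU h0; simp at this
      have : (insert 0 T).erase 0 = (insert 0 U).erase 0 := by rw [hTU]
      rwa [Finset.erase_insert h0T, Finset.erase_insert h0U] at this
    have hmapsub : ((Finset.range n).erase 0).powerset.image (insert 0) ⊆
        F.filter (fun S => 0 ∈ S) := by
      intro S hS
      simp only [Finset.mem_image, Finset.mem_powerset] at hS
      obtain ⟨T, hT, rfl⟩ := hS
      refine Finset.mem_filter.mpr ⟨h _ ?_, Finset.mem_insert_self 0 T⟩
      rw [Finset.mem_powerset]
      refine Finset.insert_subset ?_ (hT.trans (Finset.erase_subset _ _))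
      simp [Finset.mem_range]; omega
    have hcard1 : (((Finset.range n).erase 0).powerset.image (insert 0)).card
        = 2 ^ (n - 1) := by
      rw [Finset.card_image_of_injOn hinj, Finset.card_powerset,
        Finset.card_erase_of_mem (by simp [Finset.mem_range]; omega), Finset.card_range]
    have : 2 ^ (n - 1) ≤ degOf F 0 := by
      rw [← hcard1]
      exact Finset.card_le_card hmapsub
    have h0 := hdeg 0 (by simp [Finset.mem_range]; omega)
    omega
  -- pick a maximal missing set
  have hBne : ((Finset.range n).powerset.filter (· ∉ F)).Nonempty := by
    obtain ⟨S, hS1, hS2⟩ := hmiss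
    exact ⟨S, Finset.mem_filter.mpr ⟨hS1, hS2⟩⟩
  obtain ⟨S, hSB, hSmax⟩ : ∃ m ∈ (Finset.range n).powerset.filter (· ∉ F),
      ∀ x ∈ (Finset.range n).powerset.filter (· ∉ F), ¬ m < x := by
    obtain ⟨m, hm⟩ := Finset.exists_maximal hBne
    exact ⟨m, hm.prop, fun x hx hlt => lt_irrefl _ (lt_of_lt_of_le hlt (hm.2 hx hlt.le))⟩
  rw [Finset.mem_filter, Finset.mem_powerset] at hSB
  obtain ⟨hSsub, hSnotF⟩ := hSB
  -- insert S F is our new family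
  have hkey : ∀ T ∈ F, S ∪ T ∈ insert S F := by
    intro T hT
    by_cases hEq : S ∪ T = S
    · rw [hEq]; exact Finset.mem_insert_self _ _
    · have hsub : S ⊂ S ∪ T := (Finset.subset_union_left).ssubset_of_ne (Ne.symm hEq)
      have hin : S ∪ T ∈ F := by
        by_contra hno
        exact hSmax (S ∪ T) (Finset.mem_filter.mpr
          ⟨Finset.mem_powerset.mpr (Finset.union_subset hSsub (hFam T hT)), hno⟩) hsub
      exact Finset.mem_insert_of_mem hin
  have hUC' : UnionClosed (insert S F) := by
    intro A hA B hB
    rcases Finset.mem_insert.mp hA with hA' | hA'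
    · rcases Finset.mem_insert.mp hB with hB' | hB'
      · subst hA'; subst hB'; simp
      · subst hA'; exact hkey B hB'
    · rcases Finset.mem_insert.mp hB with hB' | hB'
      · subst hB'; rw [Finset.union_comm]; exact hkey A hA'
      · exact Finset.mem_insert_of_mem (hUC A hA' B hB')
  have hFam' : FamilyOn n (insert S F) := by
    intro T hT
    rcases Finset.mem_insert.mp hT with rfl | hT
    · exact hSsub
    · exact hFam T hT
  have hdeg' : ∀ e ∈ Finset.range n, degOf (insert S F) e ≤ a + 1 := by
    intro e he
    unfold degOf
    rw [Finset.filter_insert]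
    split
    · calc ((insert S (F.filter fun S => e ∈ S)).card) ≤
          (F.filter fun S => e ∈ S).card + 1 := Finset.card_insert_le _ _
        _ ≤ a + 1 := by have := hdeg e he; unfold degOf at this; omega
    · have := hdeg e he; unfold degOf at this; omega
  have hcard' : (insert S F).card = F.card + 1 := Finset.card_insert_of_notMem hSnotF
  have hle : F.card + 1 ≤ franklF n (a + 1) := by
    apply le_csSup (hbdd (a + 1))
    exact ⟨insert S F, hUC', hFam', ⟨S, Finset.mem_insert_self _ _⟩, hdeg', hcard'⟩
  have : franklF n a = F.card := hcard.symm
  omega
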